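/- (Lemma 1) There is a constant C > 0 depending only on α_1,…,α_m, β_1,…,β_m such that for all sufficiently large n and every positive integer N, if Z_1,…,Z_N and W_1,…,W_N are mutually independent with the Z_j i.i.d. distributed as Z and the W_j i.i.d. distributed as W, then Pr( ∑_{j=1}^{N} (Z_j − W_j) ≥ 0 ) ≤ 2 exp[ −N ( (log n / n) ∑_{i=1}^m (√α_i − √β_i)² − C (log n / n)² ) ]. -/

import Mathlib

open MeasureTheory Finset Filter
open scoped Classical ENNReal

/-- Law of `W`: value `log (p_k/q_k)` with probability `p_k`, `0` otherwise. -/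
noncomputable def Wdist {m : ℕ} (p q : Fin m → ℝ) : Measure ℝ :=
  (1 - ∑ k, ENNReal.ofReal (p k)) • Measure.dirac 0
    + ∑ k, ENNReal.ofReal (p k) • Measure.dirac (Real.log (p k / q k))
/-- Law of `Z`: value `log (p_k/q_k)` with probability `q_k`, `0` otherwise. -/
noncomputable def Zdist {m : ℕ} (p q : Fin m → ℝ) : Measure ℝ :=
  (1 - ∑ k, ENNReal.ofReal (q k)) • Measure.dirac 0
    + ∑ k, ENNReal.ofReal (q k) • Measure.dirac (Real.log (p k / q k))

lemma lintegral_Wdist {m : ℕ} (p q : Fin m → ℝ) (g : ℝ → ℝ≥0∞) :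
    ∫⁻ x, g x ∂(Wdist p q) = (1 - ∑ k, ENNReal.ofReal (p k)) * g 0
      + ∑ k, ENNReal.ofReal (p k) * g (Real.log (p k / q k)) := by
  rw [Wdist, lintegral_add_measure, lintegral_smul_measure, lintegral_finset_sum_measure,
    lintegral_dirac]
  congr 1
  exact Finset.sum_congr rfl fun k _ => by rw [lintegral_smul_measure, lintegral_dirac, smul_eq_mul]

lemma lintegral_Zdist {m : ℕ} (p q : Fin m → ℝ) (g : ℝ → ℝ≥0∞) :
    ∫⁻ x, g x ∂(Zdist p q) = (1 - ∑ k, ENNReal.ofReal (q k)) * g 0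
      + ∑ k, ENNReal.ofReal (q k) * g (Real.log (p k / q k)) := by
  rw [Zdist, lintegral_add_measure, lintegral_smul_measure, lintegral_finset_sum_measure,
    lintegral_dirac]
  congr 1
  exact Finset.sum_congr rfl fun k _ => by rw [lintegral_smul_measure, lintegral_dirac, smul_eq_mul]

instance Wdist.isFiniteMeasure {m : ℕ} (p q : Fin m → ℝ) : IsFiniteMeasure (Wdist p q) := by
  refine ⟨?_⟩
  have h := lintegral_Wdist p q (fun _ => 1)
  rw [lintegral_one] at h
  rw [h, mul_one]
  refine ENNReal.add_lt_top.mpr ⟨lt_of_le_of_lt tsub_le_self ENNReal.one_lt_top, ?_⟩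
  refine (ENNReal.sum_lt_top).mpr fun k _ => ?_
  simpa using ENNReal.ofReal_lt_top (p := p k)

instance Zdist.isFiniteMeasure {m : ℕ} (p q : Fin m → ℝ) : IsFiniteMeasure (Zdist p q) := by
  refine ⟨?_⟩
  have h := lintegral_Zdist p q (fun _ => 1)
  rw [lintegral_one] at h
  rw [h, mul_one]
  refine ENNReal.add_lt_top.mpr ⟨lt_of_le_of_lt tsub_le_self ENNReal.one_lt_top, ?_⟩
  refine (ENNReal.sum_lt_top).mpr fun k _ => ?_
  simpa using ENNReal.ofReal_lt_top (p := q k)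

lemma lintegral_pi_pow {E : Type*} [MeasurableSpace E] (μ : Measure E) [SigmaFinite μ]
    {g : E → ℝ≥0∞} (hg : Measurable g) (N : ℕ) :
    ∫⁻ x : Fin N → E, ∏ i, g (x i) ∂Measure.pi (fun _ => μ) = (∫⁻ a, g a ∂μ) ^ N := by
  induction N with
  | zero => simp
  | succ N ih =>
    have h := (measurePreserving_piFinSuccAbove (fun _ : Fin (N + 1) => μ) 0).symm
    rw [h.lintegral_map_equiv (fun x : Fin (N + 1) → E => ∏ i, g (x i))]
    simp_rw [MeasurableEquiv.piFinSuccAbove_symm_apply, Fin.insertNthEquiv, Equiv.coe_fn_mk,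
      Fin.insertNth_zero, Fin.prod_univ_succ, Fin.cons_zero, Fin.cons_succ]
    simp only [Fin.zero_succAbove, cast_eq]
    have h2 : Measurable fun y : Fin N → E => ∏ i, g (y i) :=
      Finset.measurable_prod Finset.univ fun i _ => hg.comp (measurable_pi_apply i)
    rw [lintegral_prod_mul (f := g) (g := fun y : Fin N → E => ∏ i, g (y i)) hg.aemeasurable
      h2.aemeasurable]
    rw [ih, pow_succ, mul_comm]

lemma meas_le_lintegral {α : Type*} [MeasurableSpace α] (μ : Measure α) {A : Set α}
    {G : α → ℝ≥0∞} (hG : Measurable G) (h1 : ∀ x ∈ A, 1 ≤ G x) : μ A ≤ ∫⁻ x, G x ∂μ :=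
  le_trans (le_trans (setLIntegral_one A).symm.le (setLIntegral_mono hG h1))
    (setLIntegral_le_lintegral A G)

theorem lemma1 (m : ℕ) (hm : 0 < m) (α β : Fin m → ℝ)
    (hα : ∀ i, 0 < α i) (hβ : ∀ i, 0 < β i) (hne : ∃ i, α i ≠ β i) :
    ∃ C : ℝ, 0 < C ∧ ∃ N₀ : ℕ, ∀ n : ℕ, N₀ ≤ n → ∀ N : ℕ, 1 ≤ N →
      Measure.pi (fun _ : Fin N =>
          (Zdist (fun i => α i * Real.log n / n) (fun i => β i * Real.log n / n)).prod
            (Wdist (fun i => α i * Real.log n / n) (fun i => β i * Real.log n / n)))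
        {f | (0 : ℝ) ≤ ∑ j, ((f j).1 - (f j).2)} ≤
      ENNReal.ofReal (2 * Real.exp (-(N : ℝ) *
        (Real.log n / n * ∑ i, (Real.sqrt (α i) - Real.sqrt (β i)) ^ 2 -
          C * (Real.log n / n) ^ 2))) := by
  classical
  refine ⟨1, one_pos, ?_⟩
  set M : ℝ := max (∑ i, α i) (∑ i, β i) + 1 with hMdef
  have hsumα : 0 ≤ ∑ i, α i := Finset.sum_nonneg fun i _ => (hα i).le
  have hM0 : 0 < M := by
    have := le_max_left (∑ i, α i) (∑ i, β i)
    simp only [hMdef]; linarith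
  have htend : Tendsto (fun n : ℕ => Real.log n / n) atTop (nhds 0) :=
    (Real.isLittleO_log_id_atTop.tendsto_div_nhds_zero).comp tendsto_natCast_atTop_atTop
  have hev : ∀ᶠ n : ℕ in atTop, Real.log n / n < M⁻¹ :=
    htend.eventually_lt_const (by positivity)
  obtain ⟨N₁, hN₁⟩ := eventually_atTop.mp hev
  refine ⟨max N₁ 2, ?_⟩
  intro n hn N hN
  have hn2 : 2 ≤ n := le_trans (le_max_right _ _) hn
  have hnn : (2 : ℝ) ≤ (n : ℝ) := by exact_mod_cast hn2
  set L : ℝ := Real.log n / n with hLdef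
  have hL0 : 0 < L := div_pos (Real.log_pos (by linarith)) (by linarith)
  have hLM : L < M⁻¹ := hN₁ n (le_trans (le_max_left _ _) hn)
  set P : Fin m → ℝ := fun i => α i * Real.log n / n with hPdef
  set Q : Fin m → ℝ := fun i => β i * Real.log n / n with hQdef
  have hPL : ∀ i, P i = α i * L := fun i => by rw [hPdef]; exact mul_div_assoc _ _ _
  have hQL : ∀ i, Q i = β i * L := fun i => by rw [hQdef]; exact mul_div_assoc _ _ _
  have hP0 : ∀ i, 0 < P i := fun i => by rw [hPL]; exact mul_pos (hα i) hL0
  have hQ0 : ∀ i, 0 < Q i := fun i => by rw [hQL]; exact mul_pos (hβ i) hL0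
  have hPsum : ∑ i, P i ≤ 1 := by
    have h1 : ∑ i, P i = (∑ i, α i) * L := by
      rw [Finset.sum_mul]; exact Finset.sum_congr rfl fun i _ => hPL i
    rw [h1]
    calc (∑ i, α i) * L ≤ M * L := by
          have := le_max_left (∑ i, α i) (∑ i, β i)
          have hMα : (∑ i, α i) ≤ M := by simp only [hMdef]; linarith
          exact mul_le_mul_of_nonneg_right hMα hL0.le
      _ ≤ M * M⁻¹ := mul_le_mul_of_nonneg_left hLM.le hM0.le
      _ = 1 := mul_inv_cancel₀ hM0.ne'
  have hQsum : ∑ i, Q i ≤ 1 := by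
    have h1 : ∑ i, Q i = (∑ i, β i) * L := by
      rw [Finset.sum_mul]; exact Finset.sum_congr rfl fun i _ => hQL i
    rw [h1]
    calc (∑ i, β i) * L ≤ M * L := by
          have := le_max_right (∑ i, α i) (∑ i, β i)
          have hMβ : (∑ i, β i) ≤ M := by simp only [hMdef]; linarith
          exact mul_le_mul_of_nonneg_right hMβ hL0.le
      _ ≤ M * M⁻¹ := mul_le_mul_of_nonneg_left hLM.le hM0.le
      _ = 1 := mul_inv_cancel₀ hM0.ne'
  set s : ℝ := ∑ k, Real.sqrt (P k) * Real.sqrt (Q k) with hsdef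
  have hs0 : 0 ≤ s :=
    Finset.sum_nonneg fun k _ => mul_nonneg (Real.sqrt_nonneg _) (Real.sqrt_nonneg _)
  set Sg : ℝ := ∑ i, (Real.sqrt (α i) - Real.sqrt (β i)) ^ 2 with hSgdef
  -- the two one-dimensional integrals
  set gZ : ℝ → ℝ≥0∞ := fun z => ENNReal.ofReal (Real.exp (z / 2)) with hgZdef
  set gW : ℝ → ℝ≥0∞ := fun w => ENNReal.ofReal (Real.exp (-w / 2)) with hgWdef
  have hgZm : Measurable gZ :=
    ENNReal.measurable_ofReal.comp (Real.measurable_exp.comp (measurable_id.div_const 2))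
  have hgWm : Measurable gW :=
    ENNReal.measurable_ofReal.comp (Real.measurable_exp.comp (measurable_id.neg.div_const 2))
  have hofQ : ∑ k, ENNReal.ofReal (Q k) = ENNReal.ofReal (∑ k, Q k) :=
    (ENNReal.ofReal_sum_of_nonneg fun k _ => (hQ0 k).le).symm
  have hofP : ∑ k, ENNReal.ofReal (P k) = ENNReal.ofReal (∑ k, P k) :=
    (ENNReal.ofReal_sum_of_nonneg fun k _ => (hP0 k).le).symm
  have hEZ : ∫⁻ z, gZ z ∂(Zdist P Q) = ENNReal.ofReal (1 - ∑ k, Q k + s) := by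
    rw [lintegral_Zdist]
    have h0 : gZ 0 = 1 := by simp [hgZdef]
    have hterm : ∀ k, ENNReal.ofReal (Q k) * gZ (Real.log (P k / Q k))
        = ENNReal.ofReal (Real.sqrt (P k) * Real.sqrt (Q k)) := by
      intro k
      have hc : 0 < P k / Q k := div_pos (hP0 k) (hQ0 k)
      have hsq : Real.exp (Real.log (P k / Q k) / 2) = Real.sqrt (P k / Q k) := by
        rw [Real.sqrt_eq_rpow, Real.rpow_def_of_pos hc, mul_one_div]
      have : gZ (Real.log (P k / Q k)) = ENNReal.ofReal (Real.sqrt (P k / Q k)) := by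
        rw [hgZdef]; simp only []; rw [hsq]
      rw [this, ← ENNReal.ofReal_mul (hQ0 k).le]
      congr 1
      rw [Real.sqrt_div (hP0 k).le]
      rw [show Q k * (Real.sqrt (P k) / Real.sqrt (Q k))
          = Real.sqrt (P k) * (Q k / Real.sqrt (Q k)) by ring, Real.div_sqrt]
    rw [h0, mul_one, Finset.sum_congr rfl fun k _ => hterm k, hofQ,
      ← ENNReal.ofReal_sum_of_nonneg
        (fun k _ => mul_nonneg (Real.sqrt_nonneg _) (Real.sqrt_nonneg _))]
    rw [show (1 : ℝ≥0∞) - ENNReal.ofReal (∑ k, Q k) = ENNReal.ofReal (1 - ∑ k, Q k) by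
      rw [ENNReal.ofReal_sub _ (Finset.sum_nonneg fun k _ => (hQ0 k).le), ENNReal.ofReal_one]]
    rw [← ENNReal.ofReal_add (by linarith) hs0]
  have hEW : ∫⁻ w, gW w ∂(Wdist P Q) = ENNReal.ofReal (1 - ∑ k, P k + s) := by
    rw [lintegral_Wdist]
    have h0 : gW 0 = 1 := by simp [hgWdef]
    have hterm : ∀ k, ENNReal.ofReal (P k) * gW (Real.log (P k / Q k))
        = ENNReal.ofReal (Real.sqrt (P k) * Real.sqrt (Q k)) := by
      intro k
      have hc : 0 < Q k / P k := div_pos (hQ0 k) (hP0 k)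
      have hlog : -Real.log (P k / Q k) = Real.log (Q k / P k) := by
        rw [← Real.log_inv, inv_div]
      have hsq : Real.exp (Real.log (Q k / P k) / 2) = Real.sqrt (Q k / P k) := by
        rw [Real.sqrt_eq_rpow, Real.rpow_def_of_pos hc, mul_one_div]
      have : gW (Real.log (P k / Q k)) = ENNReal.ofReal (Real.sqrt (Q k / P k)) := by
        rw [hgWdef]; simp only []; rw [hlog, hsq]
      rw [this, ← ENNReal.ofReal_mul (hP0 k).le]
      congr 1
      rw [Real.sqrt_div (hQ0 k).le]
      rw [show P k * (Real.sqrt (Q k) / Real.sqrt (P k))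
          = Real.sqrt (Q k) * (P k / Real.sqrt (P k)) by ring, Real.div_sqrt, mul_comm]
    rw [h0, mul_one, Finset.sum_congr rfl fun k _ => hterm k, hofP,
      ← ENNReal.ofReal_sum_of_nonneg
        (fun k _ => mul_nonneg (Real.sqrt_nonneg _) (Real.sqrt_nonneg _))]
    rw [show (1 : ℝ≥0∞) - ENNReal.ofReal (∑ k, P k) = ENNReal.ofReal (1 - ∑ k, P k) by
      rw [ENNReal.ofReal_sub _ (Finset.sum_nonneg fun k _ => (hP0 k).le), ENNReal.ofReal_one]]
    rw [← ENNReal.ofReal_add (by linarith) hs0]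
  -- the key real identity
  have hident : 2 * s - ∑ k, P k - ∑ k, Q k = -(L * Sg) := by
    have hterm1 : ∀ k : Fin m, (Real.sqrt (P k) - Real.sqrt (Q k)) ^ 2
        = L * (Real.sqrt (α k) - Real.sqrt (β k)) ^ 2 := by
      intro k
      rw [hPL k, hQL k, mul_comm (α k) L, mul_comm (β k) L, Real.sqrt_mul hL0.le,
        Real.sqrt_mul hL0.le,
        show Real.sqrt L * Real.sqrt (α k) - Real.sqrt L * Real.sqrt (β k)
          = Real.sqrt L * (Real.sqrt (α k) - Real.sqrt (β k)) by ring,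
        mul_pow, Real.sq_sqrt hL0.le]
    have hterm2 : ∀ k : Fin m, (Real.sqrt (P k) - Real.sqrt (Q k)) ^ 2
        = P k + Q k - 2 * (Real.sqrt (P k) * Real.sqrt (Q k)) := by
      intro k
      rw [sub_sq, Real.sq_sqrt (hP0 k).le, Real.sq_sqrt (hQ0 k).le]; ring
    have h3 : ∑ k, (P k + Q k - 2 * (Real.sqrt (P k) * Real.sqrt (Q k)))
        = ∑ k, L * (Real.sqrt (α k) - Real.sqrt (β k)) ^ 2 :=
      Finset.sum_congr rfl fun k _ => by rw [← hterm2 k, hterm1 k]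
    have h4 : ∑ k, (P k + Q k - 2 * (Real.sqrt (P k) * Real.sqrt (Q k)))
        = ∑ k, P k + ∑ k, Q k - 2 * s := by
      rw [hsdef, Finset.mul_sum, ← Finset.sum_add_distrib, ← Finset.sum_sub_distrib]
    have h5 : ∑ k, L * (Real.sqrt (α k) - Real.sqrt (β k)) ^ 2 = L * Sg := by
      rw [hSgdef, Finset.mul_sum]
    rw [h4, h5] at h3
    linarith
  -- Chernoff / Markov step
  set g : ℝ × ℝ → ℝ≥0∞ := fun z => ENNReal.ofReal (Real.exp ((z.1 - z.2) / 2)) with hgdef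
  have hgm : Measurable g :=
    ENNReal.measurable_ofReal.comp
      (Real.measurable_exp.comp ((measurable_fst.sub measurable_snd).div_const 2))
  have hGm : Measurable fun f : Fin N → ℝ × ℝ => ∏ j, g (f j) :=
    Finset.measurable_prod Finset.univ fun j _ => hgm.comp (measurable_pi_apply j)
  have hGone : ∀ f ∈ {f : Fin N → ℝ × ℝ | (0 : ℝ) ≤ ∑ j, ((f j).1 - (f j).2)},
      (1 : ℝ≥0∞) ≤ ∏ j, g (f j) := by
    intro f hf
    have hf' : (0 : ℝ) ≤ ∑ j, ((f j).1 - (f j).2) := hf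
    have hGf : ∏ j, g (f j)
        = ENNReal.ofReal (Real.exp ((∑ j, ((f j).1 - (f j).2)) / 2)) := by
      rw [hgdef]
      rw [← ENNReal.ofReal_prod_of_nonneg (fun j _ => (Real.exp_pos _).le), ← Real.exp_sum,
        Finset.sum_div]
    rw [hGf]
    exact ENNReal.one_le_ofReal.mpr (Real.one_le_exp (by positivity))
  have hfact : ∫⁻ z, g z ∂((Zdist P Q).prod (Wdist P Q))
      = (∫⁻ z, gZ z ∂(Zdist P Q)) * (∫⁻ w, gW w ∂(Wdist P Q)) := by
    have hsplit : ∀ z : ℝ × ℝ, g z = gZ z.1 * gW z.2 := by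
      intro z
      rw [hgdef, hgZdef, hgWdef]
      simp only []
      rw [← ENNReal.ofReal_mul (Real.exp_pos _).le, ← Real.exp_add]
      congr 1; ring
    rw [lintegral_congr hsplit]
    exact lintegral_prod_mul hgZm.aemeasurable hgWm.aemeasurable
  -- putting everything together
  have hEbound : (∫⁻ z, g z ∂((Zdist P Q).prod (Wdist P Q)))
      ≤ ENNReal.ofReal (Real.exp (-(L * Sg))) := by
    rw [hfact, hEZ, hEW]
    calc ENNReal.ofReal (1 - ∑ k, Q k + s) * ENNReal.ofReal (1 - ∑ k, P k + s)
        ≤ ENNReal.ofReal (Real.exp (s - ∑ k, Q k))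
          * ENNReal.ofReal (Real.exp (s - ∑ k, P k)) := by
          refine mul_le_mul' (ENNReal.ofReal_le_ofReal ?_) (ENNReal.ofReal_le_ofReal ?_)
          · have := Real.add_one_le_exp (s - ∑ k, Q k); linarith
          · have := Real.add_one_le_exp (s - ∑ k, P k); linarith
      _ = ENNReal.ofReal (Real.exp (-(L * Sg))) := by
          rw [← ENNReal.ofReal_mul (Real.exp_pos _).le, ← Real.exp_add,
            show s - ∑ k, Q k + (s - ∑ k, P k) = -(L * Sg) by linarith]
  calc Measure.pi (fun _ : Fin N => (Zdist P Q).prod (Wdist P Q))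
        {f | (0 : ℝ) ≤ ∑ j, ((f j).1 - (f j).2)}
      ≤ ∫⁻ f : Fin N → ℝ × ℝ, ∏ j, g (f j)
          ∂Measure.pi (fun _ : Fin N => (Zdist P Q).prod (Wdist P Q)) :=
        meas_le_lintegral _ hGm hGone
    _ = (∫⁻ z, g z ∂((Zdist P Q).prod (Wdist P Q))) ^ N := lintegral_pi_pow _ hgm N
    _ ≤ ENNReal.ofReal (Real.exp (-(L * Sg))) ^ N := pow_le_pow_left' hEbound N
    _ = ENNReal.ofReal (Real.exp (-(L * Sg)) ^ N) := (ENNReal.ofReal_pow (Real.exp_pos _).le N).symm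
    _ = ENNReal.ofReal (Real.exp (-(N : ℝ) * (L * Sg))) := by
        rw [← Real.exp_nat_mul, show (N : ℝ) * -(L * Sg) = -(N : ℝ) * (L * Sg) by ring]
    _ ≤ ENNReal.ofReal (2 * Real.exp (-(N : ℝ) * (L * Sg - 1 * L ^ 2))) := by
        refine ENNReal.ofReal_le_ofReal ?_
        have hmono : Real.exp (-(N : ℝ) * (L * Sg))
            ≤ Real.exp (-(N : ℝ) * (L * Sg - 1 * L ^ 2)) := by
          refine Real.exp_le_exp.mpr ?_
          have hN0 : (0 : ℝ) ≤ (N : ℝ) := Nat.cast_nonneg N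
          nlinarith [sq_nonneg L]
        nlinarith [Real.exp_pos (-(N : ℝ) * (L * Sg - 1 * L ^ 2))]
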